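/- Let l1,l2,l3>0 with l1+l2+l3=1, let ľ1,ľ2>0 with ľ1+ľ2=l2, let τ∈ℝ and set τ̌:=τ/l2. Let k∈ℂ with sin(kľ1)≠0 and sin(kľ2)≠0. Define the 2×2 matrices M̌ := k·[[−cot(kľ1)−cot(kľ2), e^{iτ̌ľ1}/sin(kľ1)+e^{−iτ̌ľ2}/sin(kľ2)], [e^{−iτ̌ľ1}/sin(kľ1)+e^{iτ̌ľ2}/sin(kľ2), −cot(kľ1)−cot(kľ2)]] and B̌ := diag(−(l1+l3)k², 0). Then det(M̌ − B̌) = −k²·(2cos τ + k(l1+l3)sin(kl2) − 2cos(kl2)) / (sin(kľ1)·sin(kľ2)). In particular, if k ≠ 0 then det(M̌ − B̌) = 0 if and only if 2cos τ + k(l1+l3)sin(kl2) − 2cos(kl2) = 0. -/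

import Mathlib

noncomputable section

/-- Complex cotangent. -/
def ccot (z : ℂ) : ℂ := Complex.cos z / Complex.sin z

lemma key (k L ct s1 c1 s2 c2 a1 b1 a2 b2 : ℂ) (hs1 : s1 ≠ 0) (hs2 : s2 ≠ 0)
    (hab1 : a1 * b1 = 1) (hab2 : a2 * b2 = 1) (hct : a1 * a2 + b1 * b2 = 2 * ct)
    (hp1 : s1^2 + c1^2 = 1) (hp2 : s2^2 + c2^2 = 1) :
    (k * (-(c1/s1) - c2/s2) - (-L * k^2)) * (k * (-(c1/s1) - c2/s2))
      - k * (a1/s1 + b2/s2) * (k * (b1/s1 + a2/s2))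
    = -k^2 * (2*ct + k*L*(s1*c2 + c1*s2) - 2*(c1*c2 - s1*s2)) / (s1*s2) := by
  field_simp
  linear_combination (k^2*s2^2)*hp1 + (k^2*s1^2)*hp2 - (k^2*s2^2)*hab1 - (k^2*s1^2)*hab2 - (k^2*s1*s2)*hct

/-- Section 2.6 of the paper: the singularities of the generalised resolvent of the
`z`-dependent model operator `Ǎ^{(τ̌)}(z)` on a two-edge cycle of lengths `ľ1, ľ2`
(with the energy-dependent condition at one vertex encoded by `B̌(z)`) are exactly the
solutions of the limiting dispersion relation
`2 cos τ + k(l1+l3) sin(k l2) − 2 cos(k l2) = 0`. -/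
theorem model_determinant (l1 l2 l3 : ℝ) (hl1 : 0 < l1) (hl2 : 0 < l2) (hl3 : 0 < l3)
    (hsum : l1 + l2 + l3 = 1) (lc1 lc2 : ℝ) (hlc1 : 0 < lc1) (hlc2 : 0 < lc2)
    (hlc : lc1 + lc2 = l2) (τ : ℝ) (τc : ℝ) (hτc : τc = τ / l2)
    (k : ℂ) (h1 : Complex.sin (k * lc1) ≠ 0) (h2 : Complex.sin (k * lc2) ≠ 0)
    (Mc Bc : Matrix (Fin 2) (Fin 2) ℂ)
    (hM : Mc = k • !![-ccot (k * lc1) - ccot (k * lc2),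
        Complex.exp (Complex.I * (τc * lc1)) / Complex.sin (k * lc1)
          + Complex.exp (-(Complex.I * (τc * lc2))) / Complex.sin (k * lc2);
        Complex.exp (-(Complex.I * (τc * lc1))) / Complex.sin (k * lc1)
          + Complex.exp (Complex.I * (τc * lc2)) / Complex.sin (k * lc2),
        -ccot (k * lc1) - ccot (k * lc2)])
    (hB : Bc = !![-(((l1 + l3 : ℝ) : ℂ)) * k ^ 2, 0; 0, 0]) :
    (Mc - Bc).det =
      -k ^ 2 * (2 * Complex.cos (τ : ℂ) + k * ((l1 + l3 : ℝ) : ℂ) * Complex.sin (k * l2)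
          - 2 * Complex.cos (k * l2)) / (Complex.sin (k * lc1) * Complex.sin (k * lc2)) ∧
    (k ≠ 0 → ((Mc - Bc).det = 0 ↔
      2 * Complex.cos (τ : ℂ) + k * ((l1 + l3 : ℝ) : ℂ) * Complex.sin (k * l2)
        - 2 * Complex.cos (k * l2) = 0)) := by
  have hθ : (τc : ℂ) * lc1 + (τc : ℂ) * lc2 = (τ : ℂ) := by
    have : τc * lc1 + τc * lc2 = τ := by
      rw [hτc]; field_simp; linear_combination τ * hlc
    exact_mod_cast congrArg (Complex.ofReal) this
  have hkl2 : k * (l2 : ℂ) = k * lc1 + k * lc2 := by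
    rw [show ((l2:ℝ):ℂ) = ((lc1:ℝ):ℂ) + ((lc2:ℝ):ℂ) by exact_mod_cast congrArg Complex.ofReal hlc.symm]
    ring
  have hab1 : Complex.exp (Complex.I * (τc * lc1)) * Complex.exp (-(Complex.I * (τc * lc1))) = 1 := by
    rw [← Complex.exp_add]; simp
  have hab2 : Complex.exp (Complex.I * (τc * lc2)) * Complex.exp (-(Complex.I * (τc * lc2))) = 1 := by
    rw [← Complex.exp_add]; simp
  have hct : Complex.exp (Complex.I * (τc * lc1)) * Complex.exp (Complex.I * (τc * lc2))
      + Complex.exp (-(Complex.I * (τc * lc1))) * Complex.exp (-(Complex.I * (τc * lc2)))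
      = 2 * Complex.cos (τ : ℂ) := by
    rw [← Complex.exp_add, ← Complex.exp_add, Complex.cos]
    rw [show Complex.I * (↑τc * ↑lc1) + Complex.I * (↑τc * ↑lc2) = (τ:ℂ) * Complex.I by
      rw [← hθ]; ring]
    rw [show -(Complex.I * (↑τc * ↑lc1)) + -(Complex.I * (↑τc * ↑lc2)) = -((τ:ℂ) * Complex.I) by
      rw [← hθ]; ring]
    ring
  have hp1 := Complex.sin_sq_add_cos_sq (k * lc1)
  have hp2 := Complex.sin_sq_add_cos_sq (k * lc2)
  have hdet : (Mc - Bc).det =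
      -k ^ 2 * (2 * Complex.cos (τ : ℂ) + k * ((l1 + l3 : ℝ) : ℂ) * Complex.sin (k * l2)
          - 2 * Complex.cos (k * l2)) / (Complex.sin (k * lc1) * Complex.sin (k * lc2)) := by
    subst hM hB
    rw [Matrix.det_fin_two]
    simp only [Matrix.sub_apply, Matrix.smul_apply, Matrix.cons_val', Matrix.cons_val_zero,
      Matrix.cons_val_one, Matrix.head_cons, Matrix.empty_val', Matrix.cons_val_fin_one,
      Matrix.head_fin_const, Matrix.of_apply, smul_eq_mul]
    rw [hkl2, Complex.sin_add, Complex.cos_add]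
    have := key k (((l1 + l3 : ℝ) : ℂ)) (Complex.cos (τ:ℂ)) (Complex.sin (k*lc1)) (Complex.cos (k*lc1))
      (Complex.sin (k*lc2)) (Complex.cos (k*lc2))
      (Complex.exp (Complex.I * (τc * lc1))) (Complex.exp (-(Complex.I * (τc * lc1))))
      (Complex.exp (Complex.I * (τc * lc2))) (Complex.exp (-(Complex.I * (τc * lc2))))
      h1 h2 hab1 hab2 hct hp1 hp2
    rw [← this]
    simp only [ccot]
    ring
  refine ⟨hdet, fun hk => ?_⟩
  rw [hdet]
  rw [div_eq_zero_iff]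
  constructor
  · rintro (h | h)
    · rcases mul_eq_zero.mp h with h' | h'
      · exact absurd h' (by simp [pow_eq_zero_iff, hk])
      · exact h'
    · exact absurd h (mul_ne_zero h1 h2)
  · intro h
    left; rw [h]; ring
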